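/- arXiv:2304.14561 — 7 statements merged into one kernel-verified Lean document; each statement's English description precedes it below -/
import Mathlib

section
/- Let (M,d) be a metric space, f : M → M a Lipschitz map, and k ≥ 1 a natural number. Then a point x satisfies d(0, f^n(x)) → ∞ as n → ∞ if and only if d(0, (f^k)^n(x)) → ∞ as n → ∞. That is, A_f = A_{f^k}. -/
open Filter Topology

theorem stmt_2 {M : Type*} [MetricSpace M] (x₀ : M)
    (f : M → M) (hf : ∃ K : NNReal, LipschitzWith K f)
    (k : ℕ) (hk : 1 ≤ k) (x : M) :
    Tendsto (fun n => dist x₀ (f^[n] x)) atTop atTop ↔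
      Tendsto (fun n => dist x₀ ((f^[k])^[n] x)) atTop atTop := by
  obtain ⟨K, hf⟩ := hf
  have hiter : ∀ n, (f^[k])^[n] = f^[k*n] := fun n => (Function.iterate_mul f k n).symm
  constructor
  · intro h
    have hkn : Tendsto (fun n : ℕ => k * n) atTop atTop :=
      tendsto_atTop_mono (fun n => Nat.le_mul_of_pos_left n hk) tendsto_id
    refine (h.comp hkn).congr fun n => ?_
    simp [Function.comp, hiter]
  · intro h
    set L : ℝ := max (K : ℝ) 1 with hL
    have hL1 : (1:ℝ) ≤ L := le_max_right _ _
    have hLpos : (0:ℝ) < L^k := by positivity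
    set C : ℝ := ∑ j ∈ Finset.range (k+1), dist x₀ (f^[j] x₀) with hC
    have hCle : ∀ j ≤ k, dist x₀ (f^[j] x₀) ≤ C := by
      intro j hj
      exact Finset.single_le_sum (f := fun i => dist x₀ (f^[i] x₀)) (fun i _ => dist_nonneg)
        (Finset.mem_range.mpr (Nat.lt_succ_of_le hj))
    have key : ∀ m : ℕ, (dist x₀ (f^[k*(m/k+1)] x) - C) / L^k ≤ dist x₀ (f^[m] x) := by
      intro m
      rw [div_le_iff₀ hLpos, sub_le_iff_le_add]
      set j := k - m % k with hj
      have hjk : j ≤ k := Nat.sub_le _ _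
      have hm : k*(m/k+1) = j + m := by
        rw [Nat.mul_add, Nat.mul_one]
        have h1 := Nat.div_add_mod m k
        have h2 := Nat.mod_lt m (show 0 < k from hk)
        omega
      rw [hm, Function.iterate_add_apply]
      calc dist x₀ (f^[j] (f^[m] x))
          ≤ dist x₀ (f^[j] x₀) + dist (f^[j] x₀) (f^[j] (f^[m] x)) := dist_triangle _ _ _
        _ ≤ C + ((K^j : NNReal) : ℝ) * dist x₀ (f^[m] x) := by
            gcongr
            · exact hCle j hjk
            · exact (hf.iterate j).dist_le_mul _ _
        _ ≤ C + L^k * dist x₀ (f^[m] x) := by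
            gcongr
            · push_cast
              calc (K:ℝ)^j ≤ L^j := by gcongr; exact le_max_left _ _
                _ ≤ L^k := pow_le_pow_right₀ hL1 hjk
        _ = dist x₀ (f^[m] x) * L^k + C := by ring
    have h1 : Tendsto (fun m : ℕ => m / k + 1) atTop atTop := by
      refine tendsto_atTop_atTop.mpr fun b => ⟨k*b, fun m hm => ?_⟩
      have h3 := Nat.div_le_div_right (c := k) hm
      rw [Nat.mul_div_cancel_left _ hk] at h3
      omega
    have h2 : Tendsto (fun m : ℕ => dist x₀ (f^[k*(m/k+1)] x)) atTop atTop := by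
      refine (h.comp h1).congr fun m => ?_
      simp only [Function.comp_apply, hiter, Nat.mul_add, Nat.mul_one,
        Function.iterate_add_apply]
    have h3 : Tendsto (fun m : ℕ => (dist x₀ (f^[k*(m/k+1)] x) - C) / L^k) atTop atTop := by
      apply Tendsto.atTop_div_const hLpos
      simpa [sub_eq_add_neg] using tendsto_atTop_add_const_right atTop (-C) h2
    exact tendsto_atTop_mono key h3
end

section
/- Let α₁, …, α_q ∈ [0, 2π). Then there exists a strictly increasing sequence (n(k)) of natural numbers such that for every p ∈ {1, …, q}, the sequence (exp(i · n(k) · α_p))_k converges to 1. -/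
open Filter Topology Real

theorem stmt_3 (q : ℕ) (α : Fin q → ℝ)
    (hα : ∀ p, α p ∈ Set.Ico (0 : ℝ) (2 * π)) :
    ∃ n : ℕ → ℕ, StrictMono n ∧ ∀ p : Fin q,
      Tendsto (fun k => Complex.exp (Complex.I * (n k : ℂ) * (α p : ℂ)))
        atTop (𝓝 1) := by
  set g : ℕ → Fin q → ℂ := fun m p => Complex.exp (Complex.I * (m : ℂ) * (α p : ℂ)) with hg
  have hnorm : ∀ m p, ‖g m p‖ = 1 := by
    intro m p
    have h : Complex.I * (m : ℂ) * (α p : ℂ) = ((m * α p : ℝ) : ℂ) * Complex.I := by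
      push_cast; ring
    simp only [hg, h, Complex.norm_exp_ofReal_mul_I]
  have hadd : ∀ a b, g (a + b) = g a * g b := by
    intro a b; funext p
    simp only [hg, Pi.mul_apply, ← Complex.exp_add]
    congr 1; push_cast; ring
  -- compactness: extract convergent subsequence
  have hK : IsCompact (Set.pi (Set.univ : Set (Fin q)) (fun _ => Metric.sphere (0:ℂ) 1)) :=
    isCompact_univ_pi (fun _ => isCompact_sphere 0 1)
  have hmem : ∀ m, g m ∈ Set.pi Set.univ (fun _ => Metric.sphere (0:ℂ) 1) := by
    intro m p _
    simp [Metric.mem_sphere, dist_zero_right, hnorm m p]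
  obtain ⟨L, -, φ, hφ, hconv⟩ := hK.tendsto_subseq hmem
  have hcauchy : CauchySeq (g ∘ φ) := hconv.cauchySeq
  rw [Metric.cauchySeq_iff] at hcauchy
  -- difference grows: φ (k + d) ≥ φ k + d
  have hgrow : ∀ k d, φ k + d ≤ φ (k + d) := by
    intro k d
    induction d with
    | zero => simp
    | succ d ih =>
      have h1 : φ (k + d) < φ (k + d + 1) := hφ (by omega)
      have h2 : k + (d + 1) = k + d + 1 := by omega
      rw [h2]
      omega
  -- key claim: arbitrarily large m with g m close to 1
  have claim : ∀ ε > 0, ∀ M : ℕ, ∃ m > M, ∀ p, ‖g m p - 1‖ < ε := by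
    intro ε hε M
    obtain ⟨N, hN⟩ := hcauchy ε hε
    set m := φ (N + (M + 1)) - φ N with hm
    have hle : φ N + (M + 1) ≤ φ (N + (M + 1)) := hgrow N (M + 1)
    have hmM : m > M := by omega
    have hsum : φ N + m = φ (N + (M + 1)) := by omega
    refine ⟨m, hmM, fun p => ?_⟩
    have hdist := hN (N + (M + 1)) (by omega) N (le_refl N)
    have heq : g (φ (N + (M + 1))) = g (φ N) * g m := by
      rw [← hsum, hadd]
    have h1 : g (φ (N + (M + 1))) p - g (φ N) p = g (φ N) p * (g m p - 1) := by
      rw [heq]; simp [Pi.mul_apply]; ring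
    have h2 : ‖g m p - 1‖ = ‖g (φ (N + (M + 1))) p - g (φ N) p‖ := by
      rw [h1, norm_mul, hnorm, one_mul]
    rw [h2]
    calc ‖g (φ (N + (M + 1))) p - g (φ N) p‖
        = dist (g (φ (N + (M + 1))) p) (g (φ N) p) := (dist_eq_norm _ _).symm
      _ ≤ dist ((g ∘ φ) (N + (M + 1))) ((g ∘ φ) N) := dist_le_pi_dist _ _ p
      _ < ε := hdist
  -- extract strictly monotone sequence
  have hfreq : ∀ k : ℕ, ∃ᶠ m in atTop, ∀ p, ‖g m p - 1‖ < 1 / ((k : ℝ) + 1) := by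
    intro k
    rw [frequently_atTop]
    intro M
    obtain ⟨m, hm, h⟩ := claim (1 / ((k : ℝ) + 1)) (by positivity) M
    exact ⟨m, le_of_lt hm, h⟩
  obtain ⟨n, hn, hnk⟩ := extraction_forall_of_frequently hfreq
  refine ⟨n, hn, fun p => ?_⟩
  have : Tendsto (fun k => ‖g (n k) p - 1‖) atTop (𝓝 0) := by
    apply squeeze_zero (fun k => norm_nonneg _) (fun k => le_of_lt (hnk k p))
    exact tendsto_one_div_add_atTop_nhds_zero_nat
  have := (tendsto_iff_norm_sub_tendsto_zero).mpr this
  exact this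
end

section
/- For every strictly increasing sequence (n(k)) of natural numbers there exists α ∈ [0, 2π) such that the sequence (exp(i · n(k) · α))_k does not converge to 1. -/
open Filter Topology Real

theorem stmt_4 (n : ℕ → ℕ) (hn : StrictMono n) :
    ∃ α ∈ Set.Ico (0 : ℝ) (2 * π),
      ¬ Tendsto (fun k => Complex.exp (Complex.I * (n k : ℂ) * (α : ℂ)))
        atTop (𝓝 1) := by
  by_contra h
  push_neg at h
  have hpi : (0:ℝ) < 2 * π := by positivity
  set F : ℕ → ℝ → ℂ := fun k α => Complex.exp (Complex.I * (n k : ℂ) * (α : ℂ)) with hF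
  -- exp at 2π is 1
  have hend : ∀ k, F k (2 * π) = 1 := by
    intro k
    have : Complex.I * (n k : ℂ) * ((2 * π : ℝ) : ℂ)
        = (n k : ℕ) * (2 * π * Complex.I) := by push_cast; ring
    rw [hF]; simp only
    rw [this, Complex.exp_nat_mul, Complex.exp_two_pi_mul_I, one_pow]
  have hptw : ∀ α ∈ Set.Ioc (0:ℝ) (2 * π),
      Tendsto (fun k => F k α) atTop (𝓝 1) := by
    intro α hα
    rcases lt_or_eq_of_le hα.2 with hlt | heq
    · exact h α ⟨hα.1.le, hlt⟩
    · subst heq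
      simp only [hend]
      exact tendsto_const_nhds
  have hmeas : ∀ᶠ k in atTop, MeasureTheory.AEStronglyMeasurable (F k)
      (MeasureTheory.volume.restrict (Set.uIoc (0:ℝ) (2 * π))) := by
    filter_upwards with k
    exact (Continuous.aestronglyMeasurable (by fun_prop)).restrict
  have hbound : ∀ᶠ k in atTop, ∀ᵐ α ∂(MeasureTheory.volume),
      α ∈ Set.uIoc (0:ℝ) (2 * π) → ‖F k α‖ ≤ 1 := by
    filter_upwards with k
    filter_upwards with α _
    rw [hF]
    simp [Complex.norm_exp]
  have hbi : IntervalIntegrable (fun _ : ℝ => (1:ℝ)) MeasureTheory.volume 0 (2 * π) :=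
    intervalIntegrable_const
  have hlim : ∀ᵐ α ∂(MeasureTheory.volume),
      α ∈ Set.uIoc (0:ℝ) (2 * π) → Tendsto (fun k => F k α) atTop (𝓝 1) := by
    filter_upwards with α hα
    exact hptw α (by rwa [Set.uIoc_of_le hpi.le] at hα)
  have hT := intervalIntegral.tendsto_integral_filter_of_dominated_convergence
    (fun _ => (1:ℝ)) hmeas hbound hbi hlim
  -- the limit integral is 2π
  have hconst : (∫ _ in (0:ℝ)..(2*π), (1:ℂ)) = ((2 * π : ℝ) : ℂ) := by
    simp
  rw [hconst] at hT
  -- each integral is 0 for k ≥ 1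
  have hzero : ∀ k ≥ 1, (∫ α in (0:ℝ)..(2*π), F k α) = 0 := by
    intro k hk
    have hnk : (n k : ℂ) ≠ 0 := by
      have h1 : n 0 < n k := hn (Nat.lt_of_lt_of_le Nat.zero_lt_one hk)
      exact Nat.cast_ne_zero.mpr (by omega)
    have hc : Complex.I * (n k : ℂ) ≠ 0 := mul_ne_zero Complex.I_ne_zero hnk
    have h2 : Complex.exp (Complex.I * (n k : ℂ) * ((2*π:ℝ):ℂ)) = 1 := hend k
    rw [hF]
    simp only
    rw [integral_exp_mul_complex hc, h2]
    simp
  have heq : (fun k => ∫ α in (0:ℝ)..(2*π), F k α) =ᶠ[atTop] (fun _ => (0:ℂ)) := by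
    filter_upwards [eventually_ge_atTop 1] with k hk using hzero k hk
  have hT0 : Tendsto (fun _ : ℕ => (0:ℂ)) atTop (𝓝 ((2 * π : ℝ) : ℂ)) :=
    hT.congr' heq
  have := tendsto_nhds_unique hT0 tendsto_const_nhds
  have : (2 * π : ℝ) = 0 := by exact_mod_cast this
  linarith [Real.pi_pos]
end

section
/- There exists a sequence (α_n)_{n≥1} of positive reals and a constant L > 0 such that: (a) α_{n+1} ≤ L · α_n for all n ≥ 1; (b) the sequence (α_n) is unbounded; (c) there exists a strictly increasing sequence (m_k) of natural numbers such that sup_{k,n} α_{n+m_k}/α_n < ∞. In particular, for every summable sequence λ ∈ ℓ¹, liminf_{m→∞} Σ_{n≥1} |λ_n| · α_{n+m}/α_n < ∞. -/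
open Filter Topology

/-- number of ones in binary expansion -/
def sbits : ℕ → ℕ
  | 0 => 0
  | n + 1 => sbits ((n + 1) / 2) + (n + 1) % 2
decreasing_by exact Nat.div_lt_self (Nat.succ_pos n) one_lt_two

lemma sbits_eq (n : ℕ) (h : n ≠ 0) : sbits n = sbits (n / 2) + n % 2 := by
  obtain ⟨m, rfl⟩ := Nat.exists_eq_succ_of_ne_zero h
  rw [sbits]

lemma sbits_two_mul (b : ℕ) : sbits (2 * b) = sbits b := by
  rcases Nat.eq_zero_or_pos b with rfl | hb
  · rfl
  · rw [sbits_eq (2 * b) (by omega)]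
    have h1 : 2 * b / 2 = b := by omega
    have h2 : 2 * b % 2 = 0 := by omega
    rw [h1, h2]
    omega

lemma sbits_two_mul_add_one (b : ℕ) : sbits (2 * b + 1) = sbits b + 1 := by
  rw [sbits_eq (2 * b + 1) (by omega)]
  have h1 : (2 * b + 1) / 2 = b := by omega
  have h2 : (2 * b + 1) % 2 = 1 := by omega
  rw [h1, h2]

lemma sbits_succ_le (a : ℕ) : sbits (a + 1) ≤ sbits a + 1 := by
  induction a using Nat.strong_induction_on with
  | _ a ih =>
    rcases Nat.even_or_odd a with ⟨b, rfl⟩ | ⟨b, rfl⟩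
    · have : b + b = 2 * b := by ring
      rw [this, sbits_two_mul_add_one, sbits_two_mul]
    · have h : 2 * b + 1 + 1 = 2 * (b + 1) := by ring
      rw [h, sbits_two_mul, sbits_two_mul_add_one]
      have hb : b < 2 * b + 1 := by omega
      exact (ih b hb).trans (by omega)

lemma sbits_add_pow (k : ℕ) : ∀ a : ℕ, sbits (a + 2 ^ k) ≤ sbits a + 1 := by
  induction k with
  | zero => intro a; simpa using sbits_succ_le a
  | succ k ih =>
    intro a
    rcases Nat.even_or_odd a with ⟨b, rfl⟩ | ⟨b, rfl⟩
    · have h : b + b + 2 ^ (k + 1) = 2 * (b + 2 ^ k) := by rw [pow_succ]; ring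
      have h2 : b + b = 2 * b := by ring
      rw [h, h2, sbits_two_mul, sbits_two_mul]
      exact ih b
    · have h : 2 * b + 1 + 2 ^ (k + 1) = 2 * (b + 2 ^ k) + 1 := by rw [pow_succ]; ring
      rw [h, sbits_two_mul_add_one, sbits_two_mul_add_one]
      exact Nat.add_le_add_right (ih b) 1

lemma sbits_pow_sub_one (k : ℕ) : sbits (2 ^ k - 1) = k := by
  induction k with
  | zero => simp [sbits]
  | succ k ih =>
    have h1 : (1 : ℕ) ≤ 2 ^ k := Nat.one_le_two_pow
    have h : 2 ^ (k + 1) - 1 = 2 * (2 ^ k - 1) + 1 := by rw [pow_succ]; omega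
    rw [h, sbits_two_mul_add_one, ih]

theorem stmt_7 :
    ∃ (α : ℕ → ℝ) (L : ℝ), 0 < L ∧ (∀ n, 0 < α n) ∧
      (∀ n, 1 ≤ n → α (n + 1) ≤ L * α n) ∧
      (∀ R : ℝ, ∃ n, R < α n) ∧
      (∃ m : ℕ → ℕ, StrictMono m ∧ ∃ B : ℝ,
        ∀ k n, 1 ≤ n → α (n + m k) / α n ≤ B) ∧
      (∀ lam : ℕ → ℝ, Summable (fun n => |lam n|) →
        ∃ C : ℝ, ∃ᶠ m in atTop, (∑' n : ℕ, |lam n| * (α (n + m) / α n)) ≤ C) := by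
  set α : ℕ → ℝ := fun n => (2 : ℝ) ^ sbits n with hα
  have hpos : ∀ n, 0 < α n := fun n => pow_pos two_pos _
  -- key: α (n + 2^k) ≤ 2 * α n
  have key : ∀ k n : ℕ, α (n + 2 ^ k) ≤ 2 * α n := by
    intro k n
    have h := sbits_add_pow k n
    calc α (n + 2 ^ k) = (2 : ℝ) ^ sbits (n + 2 ^ k) := rfl
      _ ≤ (2 : ℝ) ^ (sbits n + 1) := by
          exact pow_le_pow_right₀ (by norm_num) h
      _ = 2 * α n := by rw [pow_succ]; ring
  have keydiv : ∀ k n : ℕ, α (n + 2 ^ k) / α n ≤ 2 := by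
    intro k n
    rw [div_le_iff₀ (hpos n)]
    exact key k n
  refine ⟨α, 2, two_pos, hpos, ?_, ?_, ?_, ?_⟩
  · intro n _
    simpa using key 0 n
  · intro R
    obtain ⟨k, hk⟩ := pow_unbounded_of_one_lt R (by norm_num : (1 : ℝ) < 2)
    refine ⟨2 ^ k - 1, ?_⟩
    show R < (2 : ℝ) ^ sbits (2 ^ k - 1)
    rw [sbits_pow_sub_one]
    exact hk
  · refine ⟨fun k => 2 ^ k, ?_, 2, fun k n _ => keydiv k n⟩
    intro a b hab
    exact Nat.pow_lt_pow_right one_lt_two hab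
  · intro lam hlam
    refine ⟨2 * ∑' n, |lam n|, ?_⟩
    rw [frequently_atTop]
    intro a
    refine ⟨2 ^ a, (Nat.lt_two_pow_self (n := a)).le, ?_⟩
    have hle : ∀ n, |lam n| * (α (n + 2 ^ a) / α n) ≤ 2 * |lam n| := by
      intro n
      have := keydiv a n
      calc |lam n| * (α (n + 2 ^ a) / α n) ≤ |lam n| * 2 :=
            mul_le_mul_of_nonneg_left this (abs_nonneg _)
        _ = 2 * |lam n| := by ring
    have hnonneg : ∀ n, 0 ≤ |lam n| * (α (n + 2 ^ a) / α n) := fun n =>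
      mul_nonneg (abs_nonneg _) (le_of_lt (div_pos (hpos _) (hpos _)))
    have hs2 : Summable (fun n => 2 * |lam n|) := hlam.mul_left 2
    have hs1 : Summable (fun n => |lam n| * (α (n + 2 ^ a) / α n)) :=
      Summable.of_nonneg_of_le hnonneg hle hs2
    calc (∑' n, |lam n| * (α (n + 2 ^ a) / α n)) ≤ ∑' n, 2 * |lam n| :=
          Summable.tsum_le_tsum hle hs1 hs2
      _ = 2 * ∑' n, |lam n| := tsum_mul_left
end

section
/- Let f : [a, ∞) → [a, ∞) (with a ≤ 0) be continuous, let 0 ≤ b < c, suppose f(b) = b, f(c) = c, f(y) > y for all y ∈ (b,c), and f maps (b,c) into (b,c). Then for every x ∈ (b,c), the sequence (f^n(x))_{n∈ℕ} converges to c. -/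
open Filter Topology Set

theorem stmt_11 (a : ℝ) (ha : a ≤ 0) (f : ℝ → ℝ)
    (hmaps : MapsTo f (Ici a) (Ici a)) (hcont : ContinuousOn f (Ici a))
    (b c : ℝ) (hb : 0 ≤ b) (hbc : b < c) (hfb : f b = b) (hfc : f c = c)
    (hU : ∀ y ∈ Ioo b c, y < f y) (hmaps' : MapsTo f (Ioo b c) (Ioo b c)) :
    ∀ x ∈ Ioo b c, Tendsto (fun n => f^[n] x) atTop (𝓝 c) := by
  intro x hx
  set u : ℕ → ℝ := fun n => f^[n] x with hu
  have hmem : ∀ n, u n ∈ Ioo b c := by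
    intro n
    induction n with
    | zero => simpa [hu] using hx
    | succ n ih =>
      have h : u (n + 1) = f (u n) := by simp [hu, Function.iterate_succ_apply']
      rw [h]; exact hmaps' ih
  have hstep : ∀ n, u (n + 1) = f (u n) := fun n => by
    simp [hu, Function.iterate_succ_apply']
  have hmono : Monotone u := monotone_nat_of_le_succ fun n => by
    rw [hstep]; exact (hU _ (hmem n)).le
  have hbdd : BddAbove (Set.range u) := ⟨c, by rintro _ ⟨n, rfl⟩; exact (hmem n).2.le⟩
  set L := ⨆ n, u n with hL
  have htend : Tendsto u atTop (𝓝 L) := tendsto_atTop_ciSup hmono hbdd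
  have hbL : b < L := lt_of_lt_of_le (hmem 0).1 (le_ciSup hbdd 0)
  have hLc : L ≤ c := ciSup_le fun n => (hmem n).2.le
  have haL : a < L := lt_of_le_of_lt (ha.trans hb) hbL
  have hca : ContinuousAt f L :=
    (hcont L haL.le).continuousAt (Ici_mem_nhds haL)
  have htend2 : Tendsto (fun n => f (u n)) atTop (𝓝 (f L)) := hca.tendsto.comp htend
  have htend3 : Tendsto (fun n => u (n + 1)) atTop (𝓝 L) :=
    htend.comp (tendsto_add_atTop_nat 1)
  have hfL : f L = L := by
    have he : (fun n => u (n + 1)) = fun n => f (u n) := funext hstep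
    rw [he] at htend3
    exact tendsto_nhds_unique htend2 htend3
  have hLceq : L = c := by
    by_contra h
    exact (hU L ⟨hbL, lt_of_le_of_ne hLc h⟩).ne' hfL
  simpa [hu, hLceq] using htend
end

section
/- Let f : ℝ → ℝ be continuous with f(0) = 0, and suppose there exists x ∈ ℝ whose orbit under f is unbounded. Then there exist y ∈ ℝ and k ≥ 1 such that either y > 0 and f^k(y) > y, or y < 0 and f^k(y) < y. -/
open Filter Topology

theorem stmt_13 (f : ℝ → ℝ) (hf : Continuous f) (hf0 : f 0 = 0)
    (hx : ∃ x : ℝ, ¬ ∃ C : ℝ, ∀ n : ℕ, |f^[n] x| ≤ C) :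
    ∃ (y : ℝ) (k : ℕ), 1 ≤ k ∧
      ((0 < y ∧ y < f^[k] y) ∨ (y < 0 ∧ f^[k] y < y)) := by
  by_contra hcon
  push_neg at hcon
  obtain ⟨x, hxC⟩ := hx
  apply hxC
  rcases lt_trichotomy x 0 with hx0 | hx0 | hx0
  · -- x < 0 case
    obtain ⟨c, hc, hmax⟩ := (isCompact_Icc : IsCompact (Set.Icc x 0)).exists_isMaxOn
      ⟨0, by constructor <;> linarith⟩ hf.continuousOn
    set B : ℝ := max 0 (f c) with hB
    have key : ∀ n, f^[n] x ∈ Set.Icc x B := by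
      intro n
      induction n with
      | zero =>
        simp only [Function.iterate_zero, id]
        exact ⟨le_rfl, le_trans hx0.le (le_max_left 0 (f c))⟩
      | succ n ih =>
        rw [Function.iterate_succ_apply']
        constructor
        · have h1 := (hcon x (n+1) (by omega)).2 hx0
          rw [Function.iterate_succ_apply'] at h1
          linarith
        · rcases le_or_gt (f^[n] x) 0 with hle | hlt
          · have : f^[n] x ∈ Set.Icc x 0 := ⟨ih.1, hle⟩
            have := hmax this
            simp only [Set.mem_setOf_eq] at this
            exact le_trans this (le_max_right 0 (f c))
          · have h1 := (hcon (f^[n] x) 1 le_rfl).1 hlt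
            simp only [Function.iterate_one] at h1
            exact le_trans h1 (le_trans ih.2 le_rfl)
    refine ⟨max (-x) B, fun n => abs_le.2 ⟨?_, ?_⟩⟩
    · have := (key n).1
      have h2 := le_max_left (-x) B
      linarith
    · exact le_trans (key n).2 (le_max_right _ _)
  · -- x = 0
    refine ⟨0, fun n => ?_⟩
    rw [hx0, Function.iterate_fixed hf0]
    simp
  · -- x > 0 case
    obtain ⟨c, hc, hmin⟩ := (isCompact_Icc : IsCompact (Set.Icc 0 x)).exists_isMinOn
      ⟨0, by constructor <;> linarith⟩ hf.continuousOn
    set B : ℝ := min 0 (f c) with hB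
    have key : ∀ n, f^[n] x ∈ Set.Icc B x := by
      intro n
      induction n with
      | zero =>
        simp only [Function.iterate_zero, id]
        exact ⟨le_trans (min_le_left 0 (f c)) hx0.le, le_rfl⟩
      | succ n ih =>
        rw [Function.iterate_succ_apply']
        constructor
        · rcases le_or_gt 0 (f^[n] x) with hle | hlt
          · have : f^[n] x ∈ Set.Icc 0 x := ⟨hle, ih.2⟩
            have := hmin this
            simp only [Set.mem_setOf_eq] at this
            exact le_trans (min_le_right 0 (f c)) this
          · have h1 := (hcon (f^[n] x) 1 le_rfl).2 hlt
            simp only [Function.iterate_one] at h1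
            exact le_trans ih.1 h1
        · have h1 := (hcon x (n+1) (by omega)).1 hx0
          rw [Function.iterate_succ_apply'] at h1
          linarith
    refine ⟨max (-B) x, fun n => abs_le.2 ⟨?_, ?_⟩⟩
    · have := (key n).1
      have h2 := le_max_left (-B) x
      linarith
    · exact le_trans (key n).2 (le_max_right _ _)
end

section
/- Let (m(k))_{k≥1} be a strictly increasing sequence of positive integers such that 2·m(k) divides m(k+1) and m(k) · Σ_{j>k} 1/m(j) < 2^{-k} for all k ≥ 1. Define α = 2π Σ_{j=1}^∞ (3 + (−1)^j)/(4 m(j)). Then the sequence (exp(i · m(k) · α))_k has both 1 and −1 as accumulation points; in particular it does not converge. -/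
open Filter Topology Real

theorem stmt_19 (m : ℕ → ℕ)
    (hmono : ∀ k l : ℕ, 1 ≤ k → k < l → m k < m l)
    (hpos : ∀ k, 1 ≤ k → 0 < m k)
    (hdvd : ∀ k, 1 ≤ k → 2 * m k ∣ m (k + 1))
    (hsum : ∀ k, 1 ≤ k →
      (m k : ℝ) * (∑' j : ℕ, if k < j then 1 / (m j : ℝ) else 0) < 2 ^ (-(k : ℤ)))
    (α : ℝ)
    (hα : α = 2 * π * ∑' j : ℕ,
      if 1 ≤ j then (3 + (-1 : ℝ) ^ j) / (4 * (m j : ℝ)) else 0) :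
    (∃ φ : ℕ → ℕ, StrictMono φ ∧ (∀ k, 1 ≤ φ k) ∧
      Tendsto (fun k => Complex.exp (Complex.I * (m (φ k) : ℂ) * (α : ℂ)))
        atTop (𝓝 1)) ∧
    (∃ ψ : ℕ → ℕ, StrictMono ψ ∧ (∀ k, 1 ≤ ψ k) ∧
      Tendsto (fun k => Complex.exp (Complex.I * (m (ψ k) : ℂ) * (α : ℂ)))
        atTop (𝓝 (-1))) ∧
    ¬ ∃ L : ℂ, Tendsto (fun k => Complex.exp (Complex.I * (m k : ℂ) * (α : ℂ)))
        atTop (𝓝 L) := by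
  classical
  set f : ℕ → ℝ := fun j => if 1 ≤ j then (3 + (-1 : ℝ) ^ j) / (4 * (m j : ℝ)) else 0 with hfdef
  have hα' : α = 2 * π * ∑' j, f j := hα
  have hmne : ∀ j, 1 ≤ j → (m j : ℝ) ≠ 0 := fun j hj => by
    exact_mod_cast (hpos j hj).ne'
  have hmpos : ∀ j, 1 ≤ j → (0:ℝ) < m j := fun j hj => by exact_mod_cast hpos j hj
  have hle2 : ∀ j, 1 ≤ j → 2 * m j ≤ m (j + 1) := fun j hj =>
    Nat.le_of_dvd (hpos (j + 1) (by omega)) (hdvd j hj)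
  have hgrow : ∀ j, 1 ≤ j → 2 ^ j ≤ 2 * m j := by
    intro j hj
    induction j with
    | zero => omega
    | succ n ih =>
      rcases Nat.lt_or_ge n 1 with h | h
      · have hn1 : n = 0 := by omega
        subst hn1
        have := hpos 1 le_rfl
        simpa using by omega
      · have h1 := ih h
        have h2 := hle2 n h
        calc 2 ^ (n + 1) = 2 * 2 ^ n := by ring
          _ ≤ 2 * (2 * m n) := by omega
          _ ≤ 2 * m (n + 1) := by omega
  have hchain : ∀ j k, 1 ≤ j → j < k → 2 * m j ∣ m k := by
    intro j k hj hjk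
    induction k with
    | zero => omega
    | succ n ih =>
      rcases Nat.lt_or_ge j n with h | h
      · exact (ih h).trans ((dvd_mul_left (m n) 2).trans (hdvd n (by omega)))
      · have : j = n := by omega
        subst this
        exact hdvd j hj
  have hnum : ∀ j : ℕ, (0:ℝ) ≤ 3 + (-1:ℝ) ^ j ∧ 3 + (-1:ℝ) ^ j ≤ 4 := by
    intro j
    rcases Nat.even_or_odd j with h | h
    · rw [h.neg_one_pow]; norm_num
    · rw [h.neg_one_pow]; norm_num
  have hf0 : ∀ j, 0 ≤ f j := by
    intro j
    simp only [hfdef]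
    split
    · exact div_nonneg (hnum j).1 (by positivity)
    · exact le_rfl
  have hfle : ∀ j, 1 ≤ j → f j ≤ 1 / (m j : ℝ) := by
    intro j hj
    have h1 : f j = (3 + (-1:ℝ) ^ j) / (4 * (m j : ℝ)) := if_pos hj
    have hm := hmpos j hj
    rw [h1, div_le_div_iff₀ (by positivity) hm]
    nlinarith [(hnum j).2]
  have hgb : ∀ j, 1 ≤ j → 1 / (m j : ℝ) ≤ 2 * (1/2) ^ j := by
    intro j hj
    have h2 : (2:ℝ) ^ j ≤ 2 * m j := by exact_mod_cast hgrow j hj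
    have hp : (0:ℝ) < 2 ^ j := by positivity
    have : (1:ℝ) / m j ≤ 2 / 2 ^ j := by
      rw [div_le_div_iff₀ (hmpos j hj) hp]; nlinarith
    calc (1:ℝ) / m j ≤ 2 / 2 ^ j := this
      _ = 2 * (1/2) ^ j := by rw [one_div, inv_pow]; ring
  have hsumf : Summable f := by
    refine Summable.of_nonneg_of_le hf0 (fun j => ?_)
      ((summable_geometric_of_lt_one (by norm_num) (by norm_num : (1/2:ℝ) < 1)).mul_left 2)
    rcases Nat.lt_or_ge j 1 with h | h
    · interval_cases j
      simp [hfdef]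
    · exact (hfle j h).trans (hgb j h)
  have hsumtail : ∀ k, Summable (fun j => if k < j then f j else 0) := by
    intro k
    refine Summable.of_nonneg_of_le (fun j => ?_) (fun j => ?_) hsumf
    · split
      · exact hf0 j
      · exact le_rfl
    · split
      · exact le_rfl
      · exact hf0 j
  have hsumg : ∀ k : ℕ, Summable (fun j => if k < j then 1 / (m j : ℝ) else 0) := by
    intro k
    refine Summable.of_nonneg_of_le (fun j => ?_) (fun j => ?_)
      ((summable_geometric_of_lt_one (by norm_num) (by norm_num : (1/2:ℝ) < 1)).mul_left 2)
    · split
      · positivity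
      · exact le_rfl
    · split
      · next h => exact hgb j (by omega)
      · positivity
  set E : ℕ → ℝ := fun k => (m k : ℝ) * ∑' j, if k < j then f j else 0 with hEdef
  have hE0 : ∀ k, 0 ≤ E k := by
    intro k
    refine mul_nonneg (by positivity) (tsum_nonneg fun j => ?_)
    split
    · exact hf0 j
    · exact le_rfl
  have hElt : ∀ k, 1 ≤ k → E k < 2 ^ (-(k:ℤ)) := by
    intro k hk
    refine lt_of_le_of_lt ?_ (hsum k hk)
    refine mul_le_mul_of_nonneg_left (Summable.tsum_le_tsum (fun j => ?_) (hsumtail k) (hsumg k)) (by positivity)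
    split
    · next h => exact hfle j (by omega)
    · exact le_rfl
  have hEle : ∀ k, 1 ≤ k → E k ≤ (1/2:ℝ) ^ k := by
    intro k hk
    have : (2:ℝ) ^ (-(k:ℤ)) = (1/2) ^ k := by
      rw [zpow_neg, zpow_natCast, one_div, inv_pow]
    exact le_of_lt (this ▸ hElt k hk)
  -- splitting of tsum
  have hsplit : ∀ k : ℕ, ∑' j, f j =
      (∑ j ∈ Finset.range (k+1), f j) + ∑' j, (if k < j then f j else 0) := by
    intro k
    have h1 : Summable (fun j => if j < k + 1 then f j else 0) := by
      refine Summable.of_nonneg_of_le (fun j => ?_) (fun j => ?_) hsumf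
      · split
        · exact hf0 j
        · exact le_rfl
      · split
        · exact le_rfl
        · exact hf0 j
    have hadd : ∀ j, f j = (if j < k + 1 then f j else 0) + (if k < j then f j else 0) := by
      intro j
      rcases Nat.lt_or_ge j (k+1) with h | h
      · rw [if_pos h, if_neg (by omega), add_zero]
      · rw [if_neg (by omega), if_pos (by omega), zero_add]
    calc ∑' j, f j = ∑' j, ((if j < k + 1 then f j else 0) + (if k < j then f j else 0)) :=
          tsum_congr hadd
      _ = (∑' j, if j < k + 1 then f j else 0) + ∑' j, (if k < j then f j else 0) :=
          Summable.tsum_add h1 (hsumtail k)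
      _ = (∑ j ∈ Finset.range (k+1), f j) + ∑' j, (if k < j then f j else 0) := by
          congr 1
          rw [tsum_eq_sum (s := Finset.range (k+1)) (fun b hb => if_neg (by simpa using hb))]
          exact Finset.sum_congr rfl fun j hj => if_pos (Finset.mem_range.mp hj)
  have hint : ∀ k, 1 ≤ k → ∃ N : ℕ, (m k : ℝ) * ∑ j ∈ Finset.range k, f j = N := by
    intro k hk
    refine ⟨∑ j ∈ Finset.range k,
      (if j = 0 then 0 else if Even j then m k / m j else m k / (2 * m j)), ?_⟩
    rw [Finset.mul_sum, Nat.cast_sum]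
    refine Finset.sum_congr rfl fun j hj => ?_
    have hjk : j < k := Finset.mem_range.mp hj
    rcases Nat.lt_or_ge j 1 with h0 | hj1
    · have hj0 : j = 0 := by omega
      subst hj0
      simp [hfdef]
    · have hdvd2 : 2 * m j ∣ m k := hchain j k hj1 hjk
      have hm := hmpos j hj1
      rw [if_neg (by omega)]
      rcases Nat.even_or_odd j with he | ho
      · have h1 : f j = 1 / (m j : ℝ) := by
          simp only [hfdef, if_pos hj1, he.neg_one_pow]
          rw [div_eq_div_iff (ne_of_gt (by linarith : (0:ℝ) < 4 * (m j : ℝ))) (hmne j hj1)]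
          ring
        have hdd : m j ∣ m k := (dvd_mul_left (m j) 2).trans hdvd2
        rw [h1, if_pos he, Nat.cast_div hdd (hmne j hj1)]
        ring
      · have h1 : f j = 1 / (2 * (m j : ℝ)) := by
          simp only [hfdef, if_pos hj1, ho.neg_one_pow]
          rw [div_eq_div_iff (ne_of_gt (by linarith : (0:ℝ) < 4 * (m j : ℝ)))
            (ne_of_gt (by linarith : (0:ℝ) < 2 * (m j : ℝ)))]
          ring
        have hne2 : ((2 * m j : ℕ) : ℝ) ≠ 0 := by push_cast; positivity
        rw [h1, if_neg (Nat.not_even_iff_odd.mpr ho), Nat.cast_div hdvd2 hne2]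
        push_cast
        ring
  have hreal : ∀ k, 1 ≤ k → ∃ N : ℕ, (m k : ℝ) * α =
      2 * π * ((N : ℝ) + (3 + (-1:ℝ) ^ k) / 4 + E k) := by
    intro k hk
    obtain ⟨N, hN⟩ := hint k hk
    refine ⟨N, ?_⟩
    have hfk : (m k : ℝ) * f k = (3 + (-1:ℝ) ^ k) / 4 := by
      have hm := hmpos k hk
      simp only [hfdef, if_pos hk]
      field_simp
    have hEk : E k = (m k : ℝ) * ∑' j, (if k < j then f j else 0) := by
      simp only [hEdef]
    rw [hα', hsplit k, Finset.sum_range_succ, hEk]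
    linear_combination 2 * π * hN + 2 * π * hfk
  have hkey : ∀ k, 1 ≤ k → Complex.exp (Complex.I * (m k : ℂ) * (α : ℂ)) =
      (if Even k then 1 else -1) * Complex.exp ((E k : ℂ) * (2 * π * Complex.I)) := by
    intro k hk
    obtain ⟨N, hN⟩ := hreal k hk
    have harg : Complex.I * (m k : ℂ) * (α : ℂ) =
        ((N : ℤ) : ℂ) * (2 * π * Complex.I) +
          ((((3 + (-1:ℝ) ^ k) / 4 : ℝ) : ℂ) * (2 * π * Complex.I) +
          ((E k : ℝ) : ℂ) * (2 * π * Complex.I)) := by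
      calc Complex.I * (m k : ℂ) * (α : ℂ)
          = (((m k : ℝ) * α : ℝ) : ℂ) * Complex.I := by push_cast; ring
        _ = ((2 * π * ((N : ℝ) + (3 + (-1:ℝ) ^ k) / 4 + E k) : ℝ) : ℂ) * Complex.I := by
            rw [hN]
        _ = _ := by push_cast; ring
    rw [harg, Complex.exp_add, Complex.exp_add, Complex.exp_int_mul_two_pi_mul_I, one_mul]
    congr 1
    rcases Nat.even_or_odd k with he | ho
    · rw [if_pos he]
      have h2 : (((3 + (-1:ℝ) ^ k) / 4 : ℝ) : ℂ) = 1 := by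
        rw [he.neg_one_pow]; norm_num
      rw [h2, one_mul, Complex.exp_two_pi_mul_I]
    · rw [if_neg (Nat.not_even_iff_odd.mpr ho)]
      have h2 : (((3 + (-1:ℝ) ^ k) / 4 : ℝ) : ℂ) * (2 * π * Complex.I) =
          (π : ℂ) * Complex.I := by
        rw [ho.neg_one_pow]; push_cast; ring
      rw [h2, Complex.exp_pi_mul_I]
  have hcont : Continuous (fun x : ℝ => Complex.exp ((x : ℂ) * (2 * π * Complex.I))) := by
    fun_prop
  have htend : ∀ σ : ℕ → ℕ, (∀ n, n ≤ σ n) → (∀ n, 1 ≤ σ n) →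
      Tendsto (fun k => Complex.exp ((E (σ k) : ℂ) * (2 * π * Complex.I))) atTop (𝓝 1) := by
    intro σ hσ hσ1
    have hEt : Tendsto (fun k => E (σ k)) atTop (𝓝 0) := by
      apply squeeze_zero (fun k => hE0 _) (fun k => ?_)
        (tendsto_pow_atTop_nhds_zero_of_lt_one (by norm_num) (by norm_num : (1/2:ℝ) < 1))
      exact (hEle (σ k) (hσ1 k)).trans
        (pow_le_pow_of_le_one (by norm_num) (by norm_num) (hσ k))
    have h0 := (hcont.tendsto 0).comp hEt
    simpa [Function.comp_def] using h0
  have hT1 : Tendsto (fun k => Complex.exp (Complex.I * (m (2*k+2) : ℂ) * (α : ℂ)))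
      atTop (𝓝 1) := by
    refine (htend (fun k => 2*k+2) (fun n => by omega) (fun n => by omega)).congr fun k => ?_
    rw [hkey (2*k+2) (by omega), if_pos ⟨k+1, by ring⟩, one_mul]
  have hT2 : Tendsto (fun k => Complex.exp (Complex.I * (m (2*k+1) : ℂ) * (α : ℂ)))
      atTop (𝓝 (-1)) := by
    have h := (htend (fun k => 2*k+1) (fun n => by omega) (fun n => by omega)).neg
    refine h.congr fun k => ?_
    rw [hkey (2*k+1) (by omega), if_neg (by rintro ⟨r, hr⟩; omega), neg_one_mul]
  refine ⟨⟨fun k => 2*k+2, fun a b h => by dsimp only; omega, fun k => by dsimp only; omega, hT1⟩,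
    ⟨fun k => 2*k+1, fun a b h => by dsimp only; omega, fun k => by dsimp only; omega, hT2⟩, ?_⟩
  rintro ⟨L, hL⟩
  have h1 : Tendsto (fun k : ℕ => 2*k+2) atTop atTop :=
    tendsto_atTop_mono (fun n => by dsimp only [id]; omega) tendsto_id
  have h2 : Tendsto (fun k : ℕ => 2*k+1) atTop atTop :=
    tendsto_atTop_mono (fun n => by dsimp only [id]; omega) tendsto_id
  have e1 : L = 1 := tendsto_nhds_unique (hL.comp h1) hT1
  have e2 : L = -1 := tendsto_nhds_unique (hL.comp h2) hT2
  rw [e1] at e2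
  norm_num at e2
end
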